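/- Let (Ω, P) be a probability space, let Z : Ω → ℝ be measurable with 0 ≤ Z ≤ 1, let N : Ω → ℕ be measurable, let E ∈ [0,1] be a real number, and let m be a natural number. Then E[Z·(1−E)^{N}] ≥ (1−E)^{m} · E[Z] − sqrt( P(N > m) ) · sqrt( E[Z²] ). -/

import Mathlib

open MeasureTheory

lemma bounded_integrable {Ω : Type*} [MeasurableSpace Ω] (P : Measure Ω)
    [IsProbabilityMeasure P] {f : Ω → ℝ} (hf : Measurable f)
    (h0 : ∀ ω, 0 ≤ f ω) (h1 : ∀ ω, f ω ≤ 1) : Integrable f P := by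
  refine (integrable_const (1 : ℝ)).mono' hf.aestronglyMeasurable ?_
  filter_upwards with ω
  rw [Real.norm_eq_abs, abs_le]
  exact ⟨by linarith [h0 ω], h1 ω⟩

/-- Cauchy–Schwarz-type bound for the integral of a `[0,1]`-valued function over a set. -/
lemma cs_aux {Ω : Type*} [MeasurableSpace Ω] (P : Measure Ω) [IsProbabilityMeasure P]
    (Z : Ω → ℝ) (hZmeas : Measurable Z) (hZ0 : ∀ ω, 0 ≤ Z ω) (hZ1 : ∀ ω, Z ω ≤ 1)
    {s : Set Ω} (hs : MeasurableSet s) :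
    ∫ ω in s, Z ω ∂P ≤ Real.sqrt ((P s).toReal) * Real.sqrt (∫ ω, (Z ω) ^ 2 ∂P) := by
  have hZi : Integrable Z P := bounded_integrable P hZmeas hZ0 hZ1
  have hZ2i : Integrable (fun ω => (Z ω) ^ 2) P :=
    bounded_integrable P (hZmeas.pow_const 2) (fun ω => sq_nonneg _)
      (fun ω => by nlinarith [hZ0 ω, hZ1 ω])
  set I2 : ℝ := ∫ ω, (Z ω) ^ 2 ∂P with hI2def
  set p : ℝ := (P s).toReal with hpdef
  have hp0 : 0 ≤ p := ENNReal.toReal_nonneg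
  have hI20 : 0 ≤ I2 := integral_nonneg fun ω => sq_nonneg _
  by_cases hp : p = 0
  · have hPs : P s = 0 := by
      rw [ENNReal.toReal_eq_zero_iff] at hp
      exact hp.resolve_right (measure_ne_top P s)
    have hres : P.restrict s = 0 := Measure.restrict_eq_zero.mpr hPs
    rw [hres, integral_zero_measure]
    positivity
  by_cases hI2 : I2 = 0
  · have hZ0ae : ∀ᵐ ω ∂P, (Z ω) ^ 2 = 0 := by
      have h := (integral_eq_zero_iff_of_nonneg (fun ω => sq_nonneg (Z ω)) hZ2i).mp hI2
      filter_upwards [h] with ω hω using hω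
    have : ∫ ω in s, Z ω ∂P = 0 := by
      rw [← integral_zero Ω ℝ (μ := P.restrict s)]
      refine integral_congr_ae ?_
      filter_upwards [ae_restrict_of_ae hZ0ae] with ω hω
      exact pow_eq_zero_iff (n := 2) (by norm_num) |>.mp hω
    rw [this]
    positivity
  have hppos : 0 < p := lt_of_le_of_ne hp0 (Ne.symm hp)
  have hI2pos : 0 < I2 := lt_of_le_of_ne hI20 (Ne.symm hI2)
  set a : ℝ := Real.sqrt p / Real.sqrt I2 with hadef
  have hsp : 0 < Real.sqrt p := Real.sqrt_pos.mpr hppos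
  have hsI : 0 < Real.sqrt I2 := Real.sqrt_pos.mpr hI2pos
  have ha : 0 < a := div_pos hsp hsI
  -- pointwise AM-GM bound
  have key : ∫ ω in s, Z ω ∂P ≤ a / 2 * I2 + 1 / (2 * a) * p := by
    have h1 : ∫ ω in s, Z ω ∂P = ∫ ω, s.indicator Z ω ∂P := (integral_indicator hs).symm
    have hind : Integrable (s.indicator Z) P :=
      bounded_integrable P (hZmeas.indicator hs)
        (fun ω => Set.indicator_nonneg (fun ω _ => hZ0 ω) ω)
        (fun ω => Set.indicator_le_self' (fun ω _ => hZ0 ω) ω |>.trans (hZ1 ω))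
    have hrhs : Integrable (fun ω => a / 2 * (Z ω) ^ 2
        + 1 / (2 * a) * s.indicator (fun _ => (1 : ℝ)) ω) P := by
      exact (hZ2i.const_mul _).add
        ((integrable_indicator_iff hs).mpr ((integrableOn_const_iff).mpr (Or.inr
          (measure_lt_top P s))) |>.const_mul _)
    have hmono : ∀ ω, s.indicator Z ω ≤ a / 2 * (Z ω) ^ 2
        + 1 / (2 * a) * s.indicator (fun _ => (1 : ℝ)) ω := by
      intro ω
      by_cases hω : ω ∈ s
      · simp only [Set.indicator_of_mem hω]
        have heq : a / 2 * (Z ω) ^ 2 + 1 / (2 * a) * 1 - Z ω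
            = (a * Z ω - 1) ^ 2 / (2 * a) := by
          field_simp; ring
        rw [← sub_nonneg, heq]
        positivity
      · simp [Set.indicator_of_notMem hω, sq_nonneg, le_of_lt ha,
          mul_nonneg, sq_nonneg (Z ω)]
        positivity
    have := integral_mono hind hrhs hmono
    rw [h1]
    refine this.trans_eq ?_
    rw [integral_add (hZ2i.const_mul _) (((integrable_indicator_iff hs).mpr
      ((integrableOn_const_iff).mpr (Or.inr (measure_lt_top P s)))).const_mul _),
      integral_const_mul, integral_const_mul, integral_indicator hs]
    simp [hpdef, hI2def, measureReal_def]
  refine key.trans_eq ?_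
  have hpe : Real.sqrt p ^ 2 = p := Real.sq_sqrt hp0
  have hIe : Real.sqrt I2 ^ 2 = I2 := Real.sq_sqrt hI20
  rw [hadef]
  field_simp
  nlinarith [hpe, hIe, mul_pos hsp hsI]

/-- Key step of the abstract lower bound for the first success time: for
`0 ≤ Z ≤ 1`, an `ℕ`-valued `N`, `E ∈ [0,1]` and `m ∈ ℕ`,
`E[Z (1−E)^N] ≥ (1−E)^m E[Z] − √(P(N > m)) √(E[Z²])`. -/
theorem lower_bound_cauchy_schwarz_split
    {Ω : Type*} [MeasurableSpace Ω] (P : Measure Ω) [IsProbabilityMeasure P]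
    (Z : Ω → ℝ) (hZmeas : Measurable Z) (hZ0 : ∀ ω, 0 ≤ Z ω) (hZ1 : ∀ ω, Z ω ≤ 1)
    (N : Ω → ℕ) (hNmeas : Measurable N)
    (E : ℝ) (hE0 : 0 ≤ E) (hE1 : E ≤ 1) (m : ℕ) :
    (1 - E) ^ m * (∫ ω, Z ω ∂P)
        - Real.sqrt ((P {ω | m < N ω}).toReal) * Real.sqrt (∫ ω, (Z ω) ^ 2 ∂P)
      ≤ ∫ ω, Z ω * (1 - E) ^ (N ω) ∂P := by
  have hq0 : (0:ℝ) ≤ 1 - E := by linarith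
  have hq1 : (1:ℝ) - E ≤ 1 := by linarith
  have hs : MeasurableSet {ω | m < N ω} := hNmeas (measurableSet_lt measurable_const measurable_id)
  set s : Set Ω := {ω | m < N ω} with hsdef
  have hZi : Integrable Z P := bounded_integrable P hZmeas hZ0 hZ1
  have hfmeas : Measurable (fun ω => Z ω * (1 - E) ^ (N ω)) := by
    exact hZmeas.mul (Measurable.pow measurable_const hNmeas)
  have hf0 : ∀ ω, 0 ≤ Z ω * (1 - E) ^ (N ω) :=
    fun ω => mul_nonneg (hZ0 ω) (pow_nonneg hq0 _)
  have hf1 : ∀ ω, Z ω * (1 - E) ^ (N ω) ≤ 1 := fun ω =>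
    mul_le_one₀ (hZ1 ω) (pow_nonneg hq0 _) (pow_le_one₀ hq0 hq1)
  have hfi : Integrable (fun ω => Z ω * (1 - E) ^ (N ω)) P :=
    bounded_integrable P hfmeas hf0 hf1
  -- Step 1: restrict to the complement
  have step1 : ∫ ω in sᶜ, Z ω * (1 - E) ^ (N ω) ∂P ≤ ∫ ω, Z ω * (1 - E) ^ (N ω) ∂P :=
    setIntegral_le_integral hfi (Filter.Eventually.of_forall hf0)
  -- Step 2: on sᶜ, the integrand dominates (1-E)^m * Z
  have step2 : ∫ ω in sᶜ, (1 - E) ^ m * Z ω ∂P ≤ ∫ ω in sᶜ, Z ω * (1 - E) ^ (N ω) ∂P := by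
    refine setIntegral_mono_on ((hZi.const_mul _).integrableOn) hfi.integrableOn hs.compl ?_
    intro ω hω
    have hNle : N ω ≤ m := by
      simpa [hsdef] using hω
    rw [mul_comm ((1 - E) ^ m)]
    exact mul_le_mul_of_nonneg_left (pow_le_pow_of_le_one hq0 hq1 hNle) (hZ0 ω)
  -- Step 3: split the integral
  have step3 : ∫ ω in sᶜ, (1 - E) ^ m * Z ω ∂P
      = (1 - E) ^ m * ((∫ ω, Z ω ∂P) - ∫ ω in s, Z ω ∂P) := by
    have := integral_add_compl hs hZi
    rw [integral_const_mul]
    rw [← this]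
    ring
  -- Step 4: Cauchy-Schwarz bound on ∫_s Z
  have step4 : ∫ ω in s, Z ω ∂P
      ≤ Real.sqrt ((P s).toReal) * Real.sqrt (∫ ω, (Z ω) ^ 2 ∂P) :=
    cs_aux P Z hZmeas hZ0 hZ1 hs
  have hsint0 : 0 ≤ ∫ ω in s, Z ω ∂P :=
    setIntegral_nonneg hs (fun ω _ => hZ0 ω)
  have hpm1 : (1 - E) ^ m ≤ 1 := pow_le_one₀ hq0 hq1
  have hpm0 : 0 ≤ (1 - E) ^ m := pow_nonneg hq0 _
  calc (1 - E) ^ m * (∫ ω, Z ω ∂P)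
        - Real.sqrt ((P s).toReal) * Real.sqrt (∫ ω, (Z ω) ^ 2 ∂P)
      ≤ (1 - E) ^ m * (∫ ω, Z ω ∂P) - ∫ ω in s, Z ω ∂P := by linarith
    _ ≤ (1 - E) ^ m * ((∫ ω, Z ω ∂P) - ∫ ω in s, Z ω ∂P) := by
        nlinarith [mul_le_of_le_one_left hsint0 hpm1]
    _ = ∫ ω in sᶜ, (1 - E) ^ m * Z ω ∂P := step3.symm
    _ ≤ ∫ ω in sᶜ, Z ω * (1 - E) ^ (N ω) ∂P := step2
    _ ≤ ∫ ω, Z ω * (1 - E) ^ (N ω) ∂P := step1
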